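/- Let (X, μ) be a finite measure space, p a real number with p > 1, and s, h : X → ℝ bounded measurable functions. If ∫_X h(x)·s(x)·|s(x)|^{p−2} dμ(x) = 0, then ∫_X |s(x) − h(x)|^p dμ(x) ≥ ∫_X |s(x)|^p dμ(x). -/

import Mathlib

open MeasureTheory Real

/-- Pointwise convexity (tangent line) inequality for `|·|^p`. -/
lemma key_ineq (p : ℝ) (hp : 1 < p) (a b : ℝ) :
    |b| ^ p + p * (b * |b| ^ (p - 2)) * (a - b) ≤ |a| ^ p := by
  have hp0 : (0:ℝ) < p := by linarith
  rcases eq_or_ne b 0 with hb | hb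
  · simp [hb, Real.zero_rpow (ne_of_gt hp0), Real.rpow_nonneg (abs_nonneg a)]
  · set c : ℝ := |b| with hc
    have hcpos : 0 < c := abs_pos.mpr hb
    set u : ℝ := b * (a - b) / c ^ 2 with hu
    have hb2 : b ^ 2 = c ^ 2 := (sq_abs b).symm
    have hLHS : |b| ^ p + p * (b * |b| ^ (p - 2)) * (a - b) = c ^ p * (1 + p * u) := by
      have h1 : c ^ (p - 2) = c ^ p / c ^ 2 := by
        rw [show (p - 2 : ℝ) = p - (2:ℕ) by norm_num,
          Real.rpow_sub hcpos, Real.rpow_natCast]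
      rw [hu, ← hc, h1]
      field_simp
    have h1u : 1 + u = a * b / c ^ 2 := by
      rw [hu]; field_simp; nlinarith [hb2]
    have habs : 1 + u ≤ |a| / c := by
      rw [h1u]
      have hab : a * b ≤ |a| * c := by
        calc a * b ≤ |a * b| := le_abs_self _
        _ = |a| * c := by rw [abs_mul, hc]
      calc a * b / c ^ 2 ≤ |a| * c / c ^ 2 := by gcongr
      _ = |a| / c := by field_simp
    rw [hLHS]
    rcases le_or_gt (-1) u with hu1 | hu1
    · have hbern : 1 + p * u ≤ (1 + u) ^ p := one_add_mul_self_le_rpow_one_add hu1 hp.le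
      have h2 : (1 + u) ^ p ≤ (|a| / c) ^ p :=
        Real.rpow_le_rpow (by linarith) habs hp0.le
      calc c ^ p * (1 + p * u) ≤ c ^ p * ((|a| / c) ^ p) :=
            mul_le_mul_of_nonneg_left (hbern.trans h2) (Real.rpow_nonneg hcpos.le _)
        _ = |a| ^ p := by
            rw [Real.div_rpow (abs_nonneg a) hcpos.le]
            field_simp
    · have h0 : 1 + p * u < 0 := by nlinarith
      have : c ^ p * (1 + p * u) ≤ 0 :=
        mul_nonpos_of_nonneg_of_nonpos (Real.rpow_nonneg hcpos.le _) h0.le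
      exact this.trans (Real.rpow_nonneg (abs_nonneg a) _)

/-- orthogonality implies minimization: if `∫ h·s·|s|^{p−2} dμ = 0`
then `∫ |s − h|^p dμ ≥ ∫ |s|^p dμ`. -/
theorem stmt6 {X : Type*} [MeasurableSpace X] (μ : Measure X) [IsFiniteMeasure μ]
    (p : ℝ) (hp : 1 < p)
    (s h : X → ℝ) (hs : Measurable s) (hh : Measurable h)
    (C : ℝ) (hsb : ∀ x, |s x| ≤ C) (hhb : ∀ x, |h x| ≤ C)
    (hint : ∫ x, h x * (s x * |s x| ^ (p - 2)) ∂μ = 0) :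
    ∫ x, |s x| ^ p ∂μ ≤ ∫ x, |s x - h x| ^ p ∂μ := by
  have hp0 : (0:ℝ) < p := by linarith
  set D : ℝ := max C 0 with hD
  have hD0 : 0 ≤ D := le_max_right _ _
  have hsb' : ∀ x, |s x| ≤ D := fun x => (hsb x).trans (le_max_left _ _)
  have hhb' : ∀ x, |h x| ≤ D := fun x => (hhb x).trans (le_max_left _ _)
  -- integrability of |s|^p
  have i1 : Integrable (fun x => |s x| ^ p) μ := by
    refine (integrable_const (D ^ p)).mono'
      (by fun_prop : Measurable fun x => |s x| ^ p).aestronglyMeasurable (ae_of_all _ fun x => ?_)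
    rw [Real.norm_eq_abs, abs_of_nonneg (Real.rpow_nonneg (abs_nonneg _) _)]
    exact Real.rpow_le_rpow (abs_nonneg _) (hsb' x) hp0.le
  -- pointwise identity |s| * |s|^(p-2) = |s|^(p-1)
  have habsrw : ∀ x, |s x| * |s x| ^ (p - 2) = |s x| ^ (p - 1) := by
    intro x
    rcases eq_or_ne (s x) 0 with h0 | h0
    · simp [h0, Real.zero_rpow (show p - 1 ≠ 0 by linarith)]
    · have hpos : 0 < |s x| := abs_pos.mpr h0
      rw [show p - 1 = 1 + (p - 2) by ring, Real.rpow_add hpos, Real.rpow_one]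
  -- integrability of h * (s * |s|^(p-2))
  have i2 : Integrable (fun x => h x * (s x * |s x| ^ (p - 2))) μ := by
    refine (integrable_const (D * D ^ (p - 1))).mono'
      (by fun_prop : Measurable fun x => h x * (s x * |s x| ^ (p-2))).aestronglyMeasurable
      (ae_of_all _ fun x => ?_)
    rw [Real.norm_eq_abs, abs_mul, abs_mul,
      abs_of_nonneg (Real.rpow_nonneg (abs_nonneg _) _), habsrw x]
    exact mul_le_mul (hhb' x)
      (Real.rpow_le_rpow (abs_nonneg _) (hsb' x) (by linarith))
      (Real.rpow_nonneg (abs_nonneg _) _) hD0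
  -- integrability of |s - h|^p
  have i3 : Integrable (fun x => |s x - h x| ^ p) μ := by
    refine (integrable_const ((D + D) ^ p)).mono'
      (by fun_prop : Measurable fun x => |s x - h x| ^ p).aestronglyMeasurable (ae_of_all _ fun x => ?_)
    rw [Real.norm_eq_abs, abs_of_nonneg (Real.rpow_nonneg (abs_nonneg _) _)]
    refine Real.rpow_le_rpow (abs_nonneg _) ?_ hp0.le
    calc |s x - h x| ≤ |s x| + |h x| := abs_sub _ _
    _ ≤ D + D := add_le_add (hsb' x) (hhb' x)
  have hmono : ∫ x, (|s x| ^ p - p * (h x * (s x * |s x| ^ (p - 2)))) ∂μ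
      ≤ ∫ x, |s x - h x| ^ p ∂μ := by
    refine integral_mono (i1.sub (i2.const_mul p)) i3 fun x => ?_
    have hk := key_ineq p hp (s x - h x) (s x)
    have : |s x| ^ p - p * (h x * (s x * |s x| ^ (p - 2)))
        = |s x| ^ p + p * (s x * |s x| ^ (p - 2)) * ((s x - h x) - s x) := by ring
    rw [this]; exact hk
  rw [integral_sub i1 (i2.const_mul p), integral_const_mul, hint, mul_zero, sub_zero] at hmono
  exact hmono
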